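/- Let K be a field with char K ≠ 2, n ≥ 2 and 1 ≤ i ≤ n−1. Let V = K^{2n+1} with basis e_0, e_1, …, e_{2n} and the nondegenerate symmetric bilinear form (x,y) = 2x_0y_0 + Σ_{j=1}^n (x_j y_{n+j} + x_{n+j} y_j), with associated quadratic form Q(x) = (x,x)/2 of Witt index n. Set i' = ⌊i/2⌋ and ε = (−1)^i, and let θ be the diagonal map diag(ε; −1 repeated i' times; +1 repeated n−i' times; −1 repeated i' times; +1 repeated n−i' times) with respect to this basis. Then θ preserves the form, and the collineation it induces on the orthogonal polar space has opposition diagram B_{n;i}^1; explicitly: (a) θ maps some singular point to an opposite point, i.e. there is v with Q(v) = 0 and (v, θv) ≠ 0; (b) every totally singular subspace of dimension ≥ i+1 contains a nonzero θ-fixed vector, hence is not mapped to an opposite; (c) θ maps some totally singular i-dimensional subspace U to an opposite, i.e. U ∩ (θU)^⊥ = 0. -/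
import Mathlib


/-!
STATEMENT 9: char K ≠ 2, n ≥ 2, 1 ≤ i ≤ n−1. On V = K^{2n+1} with the bilinear form
(x,y) = 2x₀y₀ + ∑ⱼ (xⱼ y_{n+j} + x_{n+j} yⱼ) and quadratic form Q(x) = (x,x)/2 of Witt
index n, the diagonal map θ = diag(ε; −1 ×i'; +1 ×(n−i'); −1 ×i'; +1 ×(n−i')),
where i' = ⌊i/2⌋, ε = (−1)^i, preserves the form and its collineation of the orthogonal
polar space has opposition diagram B_{n;i}^1: (a) some singular point goes to an opposite;
(b) every totally singular subspace of dimension ≥ i+1 contains a nonzero fixed vector,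
hence is not mapped to an opposite; (c) some totally singular i-space goes to an opposite.
-/

open Module Submodule

noncomputable section

/-- `K^{2n+1}`, written as `K × K^n × K^n`. -/
abbrev VB (K : Type) (n : ℕ) : Type := K × (Fin n → K) × (Fin n → K)

/-- The symmetric bilinear form `(x,y) = 2x₀y₀ + ∑ⱼ (xⱼ y_{n+j} + x_{n+j} yⱼ)`. -/
def bform {K : Type} [Field K] {n : ℕ} (x y : VB K n) : K :=
  2 * x.1 * y.1 + ∑ j, (x.2.1 j * y.2.2 j + x.2.2 j * y.2.1 j)

/-- The associated quadratic form `Q(x) = (x,x)/2 = x₀² + ∑ⱼ xⱼ x_{n+j}` (Witt index n). -/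
def qform {K : Type} [Field K] {n : ℕ} (x : VB K n) : K :=
  x.1 * x.1 + ∑ j, x.2.1 j * x.2.2 j

/-- The diagonal map `diag(ε; −1 ×i'; +1 ×(n−i'); −1 ×i'; +1 ×(n−i'))`
with `i' = ⌊i/2⌋`, `ε = (−1)^i`. -/
def thetaB (K : Type) [Field K] (n i : ℕ) : VB K n → VB K n :=
  fun x => ((-1 : K) ^ i * x.1,
            fun j => if (j : ℕ) < i / 2 then - x.2.1 j else x.2.1 j,
            fun j => if (j : ℕ) < i / 2 then - x.2.2 j else x.2.2 j)

-- basic lemmas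
lemma neg_one_pow_mul_self {K : Type} [Field K] (i : ℕ) :
    ((-1:K)^i) * ((-1:K)^i) = 1 := by
  rw [← pow_add]; exact Even.neg_one_pow ⟨i, rfl⟩

lemma qform_theta {K : Type} [Field K] {n i : ℕ} (x : VB K n) :
    qform (thetaB K n i x) = qform x := by
  have h := neg_one_pow_mul_self (K := K) i
  simp only [qform, thetaB]
  congr 1
  · linear_combination x.1 * x.1 * h
  · exact Finset.sum_congr rfl fun j _ => by split_ifs <;> ring

lemma bform_theta {K : Type} [Field K] {n i : ℕ} (x y : VB K n) :
    bform (thetaB K n i x) (thetaB K n i y) = bform x y := by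
  have h := neg_one_pow_mul_self (K := K) i
  simp only [bform, thetaB]
  congr 1
  · linear_combination 2 * x.1 * y.1 * h
  · exact Finset.sum_congr rfl fun j _ => by split_ifs <;> ring

lemma bform_polar {K : Type} [Field K] {n : ℕ} (x y : VB K n) :
    bform x y = qform (x + y) - qform x - qform y := by
  simp only [bform, qform, Prod.fst_add, Prod.snd_add, Pi.add_apply]
  rw [Finset.sum_congr rfl (fun j _ => show
      (x.2.1 j + y.2.1 j) * (x.2.2 j + y.2.2 j)
        = x.2.1 j * x.2.2 j + (x.2.1 j * y.2.2 j + x.2.2 j * y.2.1 j)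
          + y.2.1 j * y.2.2 j from by ring),
]
  simp only [Finset.sum_add_distrib]
  ring

/-! ### The generic element of the totally singular `i`-space -/

def cc {K : Type} [Field K] {i : ℕ} (c : Fin i → K) (k : ℕ) : K :=
  if h : k < i then c ⟨k, h⟩ else 0

lemma cc_add {K : Type} [Field K] {i : ℕ} (c c' : Fin i → K) (k : ℕ) :
    cc (c + c') k = cc c k + cc c' k := by
  unfold cc; split <;> simp

lemma cc_smul {K : Type} [Field K] {i : ℕ} (a : K) (c : Fin i → K) (k : ℕ) :
    cc (a • c) k = a * cc c k := by
  unfold cc; split <;> simp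

lemma cc_zero {K : Type} [Field K] {i : ℕ} (k : ℕ) :
    cc (0 : Fin i → K) k = 0 := by
  unfold cc; split <;> simp

def phiFun (K : Type) [Field K] (n i : ℕ) (c : Fin i → K) : VB K n :=
  (cc c (2 * (i / 2)),
   fun j => (if (j : ℕ) < i / 2 then cc c (j : ℕ) else 0)
      + (if i / 2 ≤ (j : ℕ) ∧ (j : ℕ) < 2 * (i / 2) then cc c ((j : ℕ) - i / 2) else 0)
      + (if (j : ℕ) = 2 * (i / 2) then cc c (2 * (i / 2)) else 0),
   fun j => (if (j : ℕ) < i / 2 then cc c (i / 2 + (j : ℕ)) else 0)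
      + (if i / 2 ≤ (j : ℕ) ∧ (j : ℕ) < 2 * (i / 2) then - cc c (j : ℕ) else 0)
      + (if (j : ℕ) = 2 * (i / 2) then - cc c (2 * (i / 2)) else 0))

lemma sum_ranges {K : Type} [Field K] {n i' : ℕ} (h2i : 2 * i' < n)
    (A B : ℕ → K) (C : K) :
    (∑ j ∈ Finset.range n,
      ((if j < i' then A j else 0) + (if i' ≤ j ∧ j < 2 * i' then B (j - i') else 0)
        + (if j = 2 * i' then C else 0)))
    = (∑ k ∈ Finset.range i', A k) + (∑ k ∈ Finset.range i', B k) + C := by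
  rw [Finset.sum_add_distrib, Finset.sum_add_distrib]
  congr 1
  · congr 1
    · rw [← Finset.sum_subset (Finset.range_subset_range.2 (by omega : i' ≤ n))
        (fun x hx hnx => if_neg (by simp only [Finset.mem_range] at hnx; omega))]
      exact Finset.sum_congr rfl (fun x hx => if_pos (Finset.mem_range.1 hx))
    · rw [← Finset.sum_subset
        (by intro x hx; simp only [Finset.mem_Ico, Finset.mem_range] at *; omega :
          Finset.Ico i' (2 * i') ⊆ Finset.range n)
        (fun x hx hnx => if_neg (by simp only [Finset.mem_Ico, Finset.mem_range] at *; omega))]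
      rw [Finset.sum_congr rfl (fun x hx => if_pos (Finset.mem_Ico.1 hx)),
        Finset.sum_Ico_eq_sum_range]
      exact Finset.sum_congr (by rw [show 2 * i' - i' = i' from by omega])
        (fun k _ => by rw [show i' + k - i' = k from by omega])
  · rw [Finset.sum_ite_eq' (Finset.range n) (2 * i') (fun _ => C),
      if_pos (Finset.mem_range.2 (by omega))]

lemma qform_phi {K : Type} [Field K] {n i : ℕ} (h2i : 2 * (i / 2) < n) (c : Fin i → K) :
    qform (phiFun K n i c) = 0 := by
  have hpt : ∀ j : ℕ,
      ((if j < i / 2 then cc c j else 0)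
        + (if i / 2 ≤ j ∧ j < 2 * (i / 2) then cc c (j - i / 2) else 0)
        + (if j = 2 * (i / 2) then cc c (2 * (i / 2)) else 0))
      * ((if j < i / 2 then cc c (i / 2 + j) else 0)
        + (if i / 2 ≤ j ∧ j < 2 * (i / 2) then - cc c j else 0)
        + (if j = 2 * (i / 2) then - cc c (2 * (i / 2)) else 0))
      = (if j < i / 2 then cc c j * cc c (i / 2 + j) else 0)
        + (if i / 2 ≤ j ∧ j < 2 * (i / 2) then
            -(cc c (j - i / 2) * cc c (i / 2 + (j - i / 2))) else 0)
        + (if j = 2 * (i / 2) then -(cc c (2 * (i / 2)) * cc c (2 * (i / 2))) else 0) := by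
    intro j
    split_ifs with h1 h2 h3 <;>
      first
        | (exfalso; omega)
        | ring1
        | (rw [show i / 2 + (j - i / 2) = j from by omega]; ring1)
  have hs : (∑ j : Fin n, (phiFun K n i c).2.1 j * (phiFun K n i c).2.2 j)
      = ∑ j ∈ Finset.range n,
          (((if j < i / 2 then cc c j else 0)
            + (if i / 2 ≤ j ∧ j < 2 * (i / 2) then cc c (j - i / 2) else 0)
            + (if j = 2 * (i / 2) then cc c (2 * (i / 2)) else 0))
          * ((if j < i / 2 then cc c (i / 2 + j) else 0)
            + (if i / 2 ≤ j ∧ j < 2 * (i / 2) then - cc c j else 0)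
            + (if j = 2 * (i / 2) then - cc c (2 * (i / 2)) else 0))) :=
    Fin.sum_univ_eq_sum_range (fun j : ℕ =>
          (((if j < i / 2 then cc c j else 0)
            + (if i / 2 ≤ j ∧ j < 2 * (i / 2) then cc c (j - i / 2) else 0)
            + (if j = 2 * (i / 2) then cc c (2 * (i / 2)) else 0))
          * ((if j < i / 2 then cc c (i / 2 + j) else 0)
            + (if i / 2 ≤ j ∧ j < 2 * (i / 2) then - cc c j else 0)
            + (if j = 2 * (i / 2) then - cc c (2 * (i / 2)) else 0)))) n
  have key := calc
    (∑ j : Fin n, (phiFun K n i c).2.1 j * (phiFun K n i c).2.2 j)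
        = ∑ j ∈ Finset.range n, _ := hs
    _ = ∑ j ∈ Finset.range n,
          ((if j < i / 2 then (fun k => cc c k * cc c (i / 2 + k)) j else 0)
            + (if i / 2 ≤ j ∧ j < 2 * (i / 2) then
                (fun k => -(cc c k * cc c (i / 2 + k))) (j - i / 2) else 0)
            + (if j = 2 * (i / 2) then -(cc c (2 * (i / 2)) * cc c (2 * (i / 2))) else 0)) :=
      Finset.sum_congr rfl (fun j _ => hpt j)
    _ = (∑ k ∈ Finset.range (i / 2), cc c k * cc c (i / 2 + k))
        + (∑ k ∈ Finset.range (i / 2), -(cc c k * cc c (i / 2 + k)))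
        + -(cc c (2 * (i / 2)) * cc c (2 * (i / 2))) :=
      sum_ranges h2i (fun k => cc c k * cc c (i / 2 + k))
        (fun k => -(cc c k * cc c (i / 2 + k)))
        (-(cc c (2 * (i / 2)) * cc c (2 * (i / 2))))
  show cc c (2 * (i / 2)) * cc c (2 * (i / 2))
      + (∑ j : Fin n, (phiFun K n i c).2.1 j * (phiFun K n i c).2.2 j) = 0
  rw [key, Finset.sum_neg_distrib]
  ring

lemma cc_not_lt {K : Type} [Field K] {i : ℕ} (c : Fin i → K) {k : ℕ} (h : ¬ k < i) :
    cc c k = 0 := by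
  unfold cc; rw [dif_neg h]

lemma bform_phi {K : Type} [Field K] {n i : ℕ} (h2i : 2 * (i / 2) < n)
    (c c' : Fin i → K) :
    bform (phiFun K n i c) (thetaB K n i (phiFun K n i c')) =
      -(4 * (cc c (2 * (i / 2)) * cc c' (2 * (i / 2))))
      - 2 * ∑ k ∈ Finset.range (i / 2),
          (cc c k * cc c' (i / 2 + k) + cc c (i / 2 + k) * cc c' k) := by
  have hpt : ∀ j : ℕ,
      (((if j < i / 2 then cc c j else 0)
        + (if i / 2 ≤ j ∧ j < 2 * (i / 2) then cc c (j - i / 2) else 0)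
        + (if j = 2 * (i / 2) then cc c (2 * (i / 2)) else 0))
      * (if j < i / 2 then
          -((if j < i / 2 then cc c' (i / 2 + j) else 0)
            + (if i / 2 ≤ j ∧ j < 2 * (i / 2) then - cc c' j else 0)
            + (if j = 2 * (i / 2) then - cc c' (2 * (i / 2)) else 0))
         else ((if j < i / 2 then cc c' (i / 2 + j) else 0)
            + (if i / 2 ≤ j ∧ j < 2 * (i / 2) then - cc c' j else 0)
            + (if j = 2 * (i / 2) then - cc c' (2 * (i / 2)) else 0)))
      + ((if j < i / 2 then cc c (i / 2 + j) else 0)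
        + (if i / 2 ≤ j ∧ j < 2 * (i / 2) then - cc c j else 0)
        + (if j = 2 * (i / 2) then - cc c (2 * (i / 2)) else 0))
      * (if j < i / 2 then
          -((if j < i / 2 then cc c' j else 0)
            + (if i / 2 ≤ j ∧ j < 2 * (i / 2) then cc c' (j - i / 2) else 0)
            + (if j = 2 * (i / 2) then cc c' (2 * (i / 2)) else 0))
         else ((if j < i / 2 then cc c' j else 0)
            + (if i / 2 ≤ j ∧ j < 2 * (i / 2) then cc c' (j - i / 2) else 0)
            + (if j = 2 * (i / 2) then cc c' (2 * (i / 2)) else 0))))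
      = (if j < i / 2 then
            -(cc c j * cc c' (i / 2 + j) + cc c (i / 2 + j) * cc c' j) else 0)
        + (if i / 2 ≤ j ∧ j < 2 * (i / 2) then
            -(cc c (j - i / 2) * cc c' (i / 2 + (j - i / 2))
              + cc c (i / 2 + (j - i / 2)) * cc c' (j - i / 2)) else 0)
        + (if j = 2 * (i / 2) then
            -(2 * (cc c (2 * (i / 2)) * cc c' (2 * (i / 2)))) else 0) := by
    intro j
    split_ifs with h1 h2 h3 <;>
      first
        | (exfalso; omega)
        | ring1
        | (rw [show i / 2 + (j - i / 2) = j from by omega]; ring1)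
  have hs := Fin.sum_univ_eq_sum_range (fun j : ℕ =>
      (((if j < i / 2 then cc c j else 0)
        + (if i / 2 ≤ j ∧ j < 2 * (i / 2) then cc c (j - i / 2) else 0)
        + (if j = 2 * (i / 2) then cc c (2 * (i / 2)) else 0))
      * (if j < i / 2 then
          -((if j < i / 2 then cc c' (i / 2 + j) else 0)
            + (if i / 2 ≤ j ∧ j < 2 * (i / 2) then - cc c' j else 0)
            + (if j = 2 * (i / 2) then - cc c' (2 * (i / 2)) else 0))
         else ((if j < i / 2 then cc c' (i / 2 + j) else 0)
            + (if i / 2 ≤ j ∧ j < 2 * (i / 2) then - cc c' j else 0)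
            + (if j = 2 * (i / 2) then - cc c' (2 * (i / 2)) else 0)))
      + ((if j < i / 2 then cc c (i / 2 + j) else 0)
        + (if i / 2 ≤ j ∧ j < 2 * (i / 2) then - cc c j else 0)
        + (if j = 2 * (i / 2) then - cc c (2 * (i / 2)) else 0))
      * (if j < i / 2 then
          -((if j < i / 2 then cc c' j else 0)
            + (if i / 2 ≤ j ∧ j < 2 * (i / 2) then cc c' (j - i / 2) else 0)
            + (if j = 2 * (i / 2) then cc c' (2 * (i / 2)) else 0))
         else ((if j < i / 2 then cc c' j else 0)
            + (if i / 2 ≤ j ∧ j < 2 * (i / 2) then cc c' (j - i / 2) else 0)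
            + (if j = 2 * (i / 2) then cc c' (2 * (i / 2)) else 0))))) n
  have key := calc
    (∑ j : Fin n, ((phiFun K n i c).2.1 j * (thetaB K n i (phiFun K n i c')).2.2 j
        + (phiFun K n i c).2.2 j * (thetaB K n i (phiFun K n i c')).2.1 j))
        = _ := hs
    _ = ∑ j ∈ Finset.range n,
          ((if j < i / 2 then
              (fun k => -(cc c k * cc c' (i / 2 + k) + cc c (i / 2 + k) * cc c' k)) j else 0)
            + (if i / 2 ≤ j ∧ j < 2 * (i / 2) then
                (fun k => -(cc c k * cc c' (i / 2 + k) + cc c (i / 2 + k) * cc c' k))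
                  (j - i / 2) else 0)
            + (if j = 2 * (i / 2) then
                -(2 * (cc c (2 * (i / 2)) * cc c' (2 * (i / 2)))) else 0)) :=
      Finset.sum_congr rfl (fun j _ => hpt j)
    _ = (∑ k ∈ Finset.range (i / 2),
            -(cc c k * cc c' (i / 2 + k) + cc c (i / 2 + k) * cc c' k))
        + (∑ k ∈ Finset.range (i / 2),
            -(cc c k * cc c' (i / 2 + k) + cc c (i / 2 + k) * cc c' k))
        + -(2 * (cc c (2 * (i / 2)) * cc c' (2 * (i / 2)))) :=
      sum_ranges h2i (fun k => -(cc c k * cc c' (i / 2 + k) + cc c (i / 2 + k) * cc c' k))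
        (fun k => -(cc c k * cc c' (i / 2 + k) + cc c (i / 2 + k) * cc c' k))
        (-(2 * (cc c (2 * (i / 2)) * cc c' (2 * (i / 2)))))
  show 2 * cc c (2 * (i / 2)) * ((-1 : K) ^ i * cc c' (2 * (i / 2)))
      + (∑ j : Fin n, ((phiFun K n i c).2.1 j * (thetaB K n i (phiFun K n i c')).2.2 j
        + (phiFun K n i c).2.2 j * (thetaB K n i (phiFun K n i c')).2.1 j)) = _
  rw [key, Finset.sum_neg_distrib]
  rcases Nat.even_or_odd i with he | ho
  · have h0 : cc c (2 * (i / 2)) = 0 :=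
      cc_not_lt c (by have := Nat.even_iff.mp he; omega)
    have h0' : cc c' (2 * (i / 2)) = 0 :=
      cc_not_lt c' (by have := Nat.even_iff.mp he; omega)
    rw [h0, h0']; ring
  · rw [Odd.neg_one_pow ho]; ring

def delta {K : Type} [Field K] {i : ℕ} (m : Fin i) : Fin i → K :=
  fun t => if t = m then 1 else 0

lemma cc_delta {K : Type} [Field K] {i : ℕ} (m : Fin i) (k : ℕ) :
    cc (delta (K := K) m) k = if k = (m : ℕ) then (1:K) else 0 := by
  unfold cc delta
  rcases Nat.lt_or_ge k i with h | h
  · rw [dif_pos h]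
    by_cases he : k = (m : ℕ)
    · rw [if_pos he, if_pos (Fin.ext he)]
    · rw [if_neg he, if_neg (fun hh => he (congrArg Fin.val hh))]
  · rw [dif_neg (by omega), if_neg (by have := m.isLt; omega)]

lemma cc_coe {K : Type} [Field K] {i : ℕ} (c : Fin i → K) (κ : Fin i) :
    cc c (κ : ℕ) = c κ := by
  unfold cc; rw [dif_pos κ.isLt]

lemma half_of_two_mul_zero {K : Type} [Field K] (hchar : (2:K) ≠ 0) {a : K}
    (h : 2 * a = 0) : a = 0 := by
  rcases mul_eq_zero.mp h with h' | h'
  · exact absurd h' hchar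
  · exact h'

lemma phi_inj_core {K : Type} [Field K] {n i : ℕ} (hchar : (2:K) ≠ 0)
    (h2i : 2 * (i / 2) < n) (c : Fin i → K)
    (H : ∀ m : Fin i,
      bform (phiFun K n i c) (thetaB K n i (phiFun K n i (delta m))) = 0) :
    c = 0 := by
  have hf : ∀ m : Fin i,
      (-if 2 * (i / 2) = (m : ℕ) then 4 * cc c (2 * (i / 2)) else 0)
      - 2 * ((if i / 2 ≤ (m : ℕ) ∧ (m : ℕ) < 2 * (i / 2)
                then cc c ((m : ℕ) - i / 2) else 0)
            + (if (m : ℕ) < i / 2 then cc c (i / 2 + (m : ℕ)) else 0)) = 0 := by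
    intro m
    have h := H m
    rw [bform_phi h2i] at h
    simp only [cc_delta, mul_ite, mul_one, mul_zero] at h
    rw [Finset.sum_add_distrib,
        Finset.sum_ite_eq' (Finset.range (i / 2)) ((m : ℕ)) (fun k => cc c (i / 2 + k))]
        at h
    have hone : (∑ k ∈ Finset.range (i / 2),
        if i / 2 + k = (m : ℕ) then cc c k else 0)
        = (if i / 2 ≤ (m : ℕ) ∧ (m : ℕ) < 2 * (i / 2)
            then cc c ((m : ℕ) - i / 2) else 0) := by
      by_cases hm : i / 2 ≤ (m : ℕ) ∧ (m : ℕ) < 2 * (i / 2)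
      · rw [if_pos hm, Finset.sum_eq_single ((m : ℕ) - i / 2)]
        · rw [if_pos (by omega)]
        · intro b _ hb; exact if_neg (by omega)
        · intro hmem; exact absurd (Finset.mem_range.2 (by omega)) hmem
      · rw [if_neg hm]
        exact Finset.sum_eq_zero (fun k hk =>
          if_neg (by simp only [Finset.mem_range] at hk; omega))
    rw [hone] at h
    have htwo : (if (m : ℕ) ∈ Finset.range (i / 2) then cc c (i / 2 + (m : ℕ)) else 0)
        = (if (m : ℕ) < i / 2 then cc c (i / 2 + (m : ℕ)) else 0) := by
      by_cases hm : (m : ℕ) < i / 2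
      · rw [if_pos (Finset.mem_range.2 hm), if_pos hm]
      · rw [if_neg (fun hh => hm (Finset.mem_range.1 hh)), if_neg hm]
    rw [htwo] at h
    exact h
  funext κ
  show c κ = (0 : K)
  rw [← cc_coe c κ]
  rcases lt_or_ge (κ : ℕ) (i / 2) with hk | hk
  · have h := hf ⟨i / 2 + (κ : ℕ), by omega⟩
    rw [show ((⟨i / 2 + (κ : ℕ), by omega⟩ : Fin i) : ℕ) = i / 2 + (κ : ℕ) from rfl,
        if_neg (by omega), if_pos (by omega : i / 2 ≤ i / 2 + (κ : ℕ) ∧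
          i / 2 + (κ : ℕ) < 2 * (i / 2)),
        if_neg (by omega), show i / 2 + (κ : ℕ) - i / 2 = (κ : ℕ) from by omega] at h
    exact half_of_two_mul_zero hchar (by linear_combination -h)
  rcases lt_or_ge (κ : ℕ) (2 * (i / 2)) with hk2 | hk2
  · have h := hf ⟨(κ : ℕ) - i / 2, by omega⟩
    rw [show ((⟨(κ : ℕ) - i / 2, by omega⟩ : Fin i) : ℕ) = (κ : ℕ) - i / 2 from rfl,
        if_neg (by omega), if_neg (by omega), if_pos (by omega : (κ : ℕ) - i / 2 < i / 2),
        show i / 2 + ((κ : ℕ) - i / 2) = (κ : ℕ) from by omega] at h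
    exact half_of_two_mul_zero hchar (by linear_combination -h)
  · have hkk : (κ : ℕ) = 2 * (i / 2) := by have := κ.isLt; omega
    have h := hf κ
    rw [if_pos hkk.symm, if_neg (by omega), if_neg (by omega)] at h
    rw [hkk]
    exact half_of_two_mul_zero hchar (half_of_two_mul_zero hchar (by linear_combination -h))

def Phi (K : Type) [Field K] (n i : ℕ) : (Fin i → K) →ₗ[K] VB K n where
  toFun := phiFun K n i
  map_add' c c' := by
    simp only [phiFun, cc_add, Prod.mk_add_mk, Prod.mk.injEq]
    refine ⟨trivial, ?_, ?_⟩ <;> (funext j; simp only [Pi.add_apply]; split_ifs <;> ring)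
  map_smul' a c := by
    simp only [phiFun, cc_smul, RingHom.id_apply, Prod.smul_mk, Prod.mk.injEq]
    refine ⟨(smul_eq_mul ..).symm, ?_, ?_⟩ <;>
      (funext j; simp only [Pi.smul_apply, smul_eq_mul]; split_ifs <;> ring)

lemma bform_zero_left {K : Type} [Field K] {n : ℕ} (y : VB K n) : bform 0 y = 0 := by
  simp [bform]

lemma part_a {K : Type} [Field K] {n i : ℕ}
    (hchar : (2 : K) ≠ 0) (hn : 2 ≤ n) (hi1 : 1 ≤ i) (hi2 : i ≤ n - 1) :
    ∃ v : VB K n, v ≠ 0 ∧ qform v = 0 ∧ bform v (thetaB K n i v) ≠ 0 := by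
  obtain ⟨j0, hj0n, hsig⟩ : ∃ j0 : ℕ, j0 < n ∧
      ((j0 < i / 2 ∧ (-1:K)^i = 1) ∨ (¬ j0 < i / 2 ∧ (-1:K)^i = -1)) := by
    rcases Nat.even_or_odd i with he | ho
    · exact ⟨0, by omega,
        Or.inl ⟨by have := Nat.even_iff.mp he; omega, Even.neg_one_pow he⟩⟩
    · exact ⟨n - 1, by omega,
        Or.inr ⟨by have := Nat.odd_iff.mp ho; omega, Odd.neg_one_pow ho⟩⟩
  refine ⟨((1:K), fun j => if (j : ℕ) = j0 then (1:K) else 0,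
           fun j => if (j : ℕ) = j0 then (-1:K) else 0), ?_, ?_, ?_⟩
  · intro h
    exact one_ne_zero (congrArg Prod.fst h)
  · have hs : (∑ j : Fin n,
        (if (j : ℕ) = j0 then (1:K) else 0) * (if (j : ℕ) = j0 then (-1:K) else 0))
        = ∑ j ∈ Finset.range n,
          ((if j = j0 then (1:K) else 0) * (if j = j0 then (-1:K) else 0)) :=
      Fin.sum_univ_eq_sum_range
        (fun j => (if j = j0 then (1:K) else 0) * (if j = j0 then (-1:K) else 0)) n
    show (1:K) * 1 + (∑ j : Fin n,
        (if (j : ℕ) = j0 then (1:K) else 0) * (if (j : ℕ) = j0 then (-1:K) else 0)) = 0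
    rw [hs, Finset.sum_congr rfl (fun j _ =>
        show (if j = j0 then (1:K) else 0) * (if j = j0 then (-1:K) else 0)
          = (if j = j0 then (-1:K) else 0) from by split_ifs <;> ring),
      Finset.sum_ite_eq' (Finset.range n) j0 (fun _ => (-1:K)),
      if_pos (Finset.mem_range.2 hj0n)]
    ring
  · have hs : (∑ j : Fin n,
        ((if (j : ℕ) = j0 then (1:K) else 0)
          * (if (j : ℕ) < i / 2 then -(if (j : ℕ) = j0 then (-1:K) else 0)
              else (if (j : ℕ) = j0 then (-1:K) else 0))
        + (if (j : ℕ) = j0 then (-1:K) else 0)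
          * (if (j : ℕ) < i / 2 then -(if (j : ℕ) = j0 then (1:K) else 0)
              else (if (j : ℕ) = j0 then (1:K) else 0))))
        = ∑ j ∈ Finset.range n,
          ((if j = j0 then (1:K) else 0)
            * (if j < i / 2 then -(if j = j0 then (-1:K) else 0)
                else (if j = j0 then (-1:K) else 0))
          + (if j = j0 then (-1:K) else 0)
            * (if j < i / 2 then -(if j = j0 then (1:K) else 0)
                else (if j = j0 then (1:K) else 0))) :=
      Fin.sum_univ_eq_sum_range (fun j =>
          ((if j = j0 then (1:K) else 0)
            * (if j < i / 2 then -(if j = j0 then (-1:K) else 0)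
                else (if j = j0 then (-1:K) else 0))
          + (if j = j0 then (-1:K) else 0)
            * (if j < i / 2 then -(if j = j0 then (1:K) else 0)
                else (if j = j0 then (1:K) else 0)))) n
    have hpt : ∀ j : ℕ,
        ((if j = j0 then (1:K) else 0)
            * (if j < i / 2 then -(if j = j0 then (-1:K) else 0)
                else (if j = j0 then (-1:K) else 0))
          + (if j = j0 then (-1:K) else 0)
            * (if j < i / 2 then -(if j = j0 then (1:K) else 0)
                else (if j = j0 then (1:K) else 0)))
        = (if j = j0 then (if j < i / 2 then (2:K) else -2) else 0) := by
      intro j; split_ifs <;> ring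
    have hb : bform ((1:K), fun j => if (j : ℕ) = j0 then (1:K) else 0,
           fun j => if (j : ℕ) = j0 then (-1:K) else 0)
        (thetaB K n i ((1:K), fun j => if (j : ℕ) = j0 then (1:K) else 0,
           fun j => if (j : ℕ) = j0 then (-1:K) else 0))
        = 2 * (-1:K)^i + (if j0 < i / 2 then (2:K) else -2) := by
      show 2 * 1 * ((-1:K)^i * 1) + (∑ j : Fin n,
        ((if (j : ℕ) = j0 then (1:K) else 0)
          * (if (j : ℕ) < i / 2 then -(if (j : ℕ) = j0 then (-1:K) else 0)
              else (if (j : ℕ) = j0 then (-1:K) else 0))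
        + (if (j : ℕ) = j0 then (-1:K) else 0)
          * (if (j : ℕ) < i / 2 then -(if (j : ℕ) = j0 then (1:K) else 0)
              else (if (j : ℕ) = j0 then (1:K) else 0)))) = _
      rw [hs, Finset.sum_congr rfl (fun j _ => hpt j),
        Finset.sum_ite_eq' (Finset.range n) j0 (fun j => if j < i / 2 then (2:K) else -2),
        if_pos (Finset.mem_range.2 hj0n)]
      ring
    rw [hb]
    rcases hsig with ⟨h1, h2⟩ | ⟨h1, h2⟩
    · rw [h2, if_pos h1]
      intro hz
      exact (mul_ne_zero hchar hchar) (by linear_combination hz)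
    · rw [h2, if_neg h1]
      intro hz
      exact (mul_ne_zero hchar hchar) (by linear_combination -hz)

lemma part_b {K : Type} [Field K] {n i : ℕ}
    (hchar : (2 : K) ≠ 0) (hn : 2 ≤ n) (hi1 : 1 ≤ i) (hi2 : i ≤ n - 1)
    (U : Submodule K (VB K n)) (hts : ∀ x ∈ U, qform x = 0)
    (hdim : i + 1 ≤ finrank K U) :
    (∃ v ∈ U, v ≠ 0 ∧ thetaB K n i v = v) ∧
      ¬ (∀ v ∈ U, (∀ u ∈ U, bform v (thetaB K n i u) = 0) → v = 0) := by
  have hle : i / 2 ≤ n := by omega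
  obtain ⟨v, hvU, hv0, hvfix⟩ : ∃ v ∈ U, v ≠ 0 ∧ thetaB K n i v = v := by
    rcases Nat.even_or_odd i with he | ho
    · -- even case
      have hie : i % 2 = 0 := Nat.even_iff.mp he
      let ψ : VB K n →ₗ[K] ((Fin (i / 2) → K) × (Fin (i / 2) → K)) :=
        { toFun := fun x => (fun j => x.2.1 (Fin.castLE hle j),
                             fun j => x.2.2 (Fin.castLE hle j)),
          map_add' := fun x y => rfl,
          map_smul' := fun a x => rfl }
      have hni : ¬ Function.Injective (ψ.comp U.subtype) := by
        intro hinj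
        have hle2 := LinearMap.finrank_le_finrank_of_injective hinj
        rw [Module.finrank_prod, Module.finrank_pi, Fintype.card_fin] at hle2
        omega
      have hker : LinearMap.ker (ψ.comp U.subtype) ≠ ⊥ :=
        fun h => hni (LinearMap.ker_eq_bot.mp h)
      obtain ⟨u, huk, hu0⟩ := (Submodule.ne_bot_iff _).mp hker
      have hks : ψ (u : VB K n) = 0 := huk
      have h1 : ∀ j : Fin n, (j : ℕ) < i / 2 → (u : VB K n).2.1 j = 0 := by
        intro j hj
        exact congrFun (congrArg Prod.fst hks) ⟨(j : ℕ), hj⟩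
      have h2 : ∀ j : Fin n, (j : ℕ) < i / 2 → (u : VB K n).2.2 j = 0 := by
        intro j hj
        exact congrFun (congrArg Prod.snd hks) ⟨(j : ℕ), hj⟩
      refine ⟨(u : VB K n), u.2, fun h => hu0 (Subtype.ext h), ?_⟩
      refine Prod.ext ?_ (Prod.ext ?_ ?_)
      · show (-1:K)^i * (u : VB K n).1 = (u : VB K n).1
        rw [Even.neg_one_pow he, one_mul]
      · funext j
        show (if (j : ℕ) < i / 2 then -(u : VB K n).2.1 j else (u : VB K n).2.1 j)
          = (u : VB K n).2.1 j
        split_ifs with h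
        · rw [h1 j h, neg_zero]
        · rfl
      · funext j
        show (if (j : ℕ) < i / 2 then -(u : VB K n).2.2 j else (u : VB K n).2.2 j)
          = (u : VB K n).2.2 j
        split_ifs with h
        · rw [h2 j h, neg_zero]
        · rfl
    · -- odd case
      have hio : i % 2 = 1 := Nat.odd_iff.mp ho
      let ψ : VB K n →ₗ[K] (K × (Fin (i / 2) → K) × (Fin (i / 2) → K)) :=
        { toFun := fun x => (x.1, fun j => x.2.1 (Fin.castLE hle j),
                             fun j => x.2.2 (Fin.castLE hle j)),
          map_add' := fun x y => rfl,
          map_smul' := fun a x => rfl }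
      have hni : ¬ Function.Injective (ψ.comp U.subtype) := by
        intro hinj
        have hle2 := LinearMap.finrank_le_finrank_of_injective hinj
        rw [Module.finrank_prod, Module.finrank_prod, Module.finrank_pi,
          Module.finrank_self, Fintype.card_fin] at hle2
        omega
      have hker : LinearMap.ker (ψ.comp U.subtype) ≠ ⊥ :=
        fun h => hni (LinearMap.ker_eq_bot.mp h)
      obtain ⟨u, huk, hu0⟩ := (Submodule.ne_bot_iff _).mp hker
      have hks : ψ (u : VB K n) = 0 := huk
      have h0 : (u : VB K n).1 = 0 := congrArg Prod.fst hks
      have h1 : ∀ j : Fin n, (j : ℕ) < i / 2 → (u : VB K n).2.1 j = 0 := by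
        intro j hj
        exact congrFun (congrArg (fun z => z.2.1) hks) ⟨(j : ℕ), hj⟩
      have h2 : ∀ j : Fin n, (j : ℕ) < i / 2 → (u : VB K n).2.2 j = 0 := by
        intro j hj
        exact congrFun (congrArg (fun z => z.2.2) hks) ⟨(j : ℕ), hj⟩
      refine ⟨(u : VB K n), u.2, fun h => hu0 (Subtype.ext h), ?_⟩
      refine Prod.ext ?_ (Prod.ext ?_ ?_)
      · show (-1:K)^i * (u : VB K n).1 = (u : VB K n).1
        rw [h0, mul_zero]
      · funext j
        show (if (j : ℕ) < i / 2 then -(u : VB K n).2.1 j else (u : VB K n).2.1 j)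
          = (u : VB K n).2.1 j
        split_ifs with h
        · rw [h1 j h, neg_zero]
        · rfl
      · funext j
        show (if (j : ℕ) < i / 2 then -(u : VB K n).2.2 j else (u : VB K n).2.2 j)
          = (u : VB K n).2.2 j
        split_ifs with h
        · rw [h2 j h, neg_zero]
        · rfl
  refine ⟨⟨v, hvU, hv0, hvfix⟩, ?_⟩
  intro Hopp
  apply hv0
  apply Hopp v hvU
  intro u huU
  have hstep : bform v (thetaB K n i u) = bform v u := by
    conv_lhs => rw [← hvfix]
    rw [bform_theta]
  rw [hstep, bform_polar, hts _ (U.add_mem hvU huU), hts _ hvU, hts _ huU]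
  ring

lemma part_c {K : Type} [Field K] {n i : ℕ}
    (hchar : (2 : K) ≠ 0) (hn : 2 ≤ n) (hi1 : 1 ≤ i) (hi2 : i ≤ n - 1) :
    ∃ U : Submodule K (VB K n), (∀ x ∈ U, qform x = 0) ∧ finrank K U = i ∧
      (∀ v ∈ U, (∀ u ∈ U, bform v (thetaB K n i u) = 0) → v = 0) := by
  have h2i : 2 * (i / 2) < n := by omega
  refine ⟨LinearMap.range (Phi K n i), ?_, ?_, ?_⟩
  · rintro x ⟨c, rfl⟩
    exact qform_phi h2i c
  · have hker : LinearMap.ker (Phi K n i) = ⊥ := by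
      rw [eq_bot_iff]
      rintro c hc
      have hc0 : Phi K n i c = 0 := hc
      have : c = 0 := by
        apply phi_inj_core hchar h2i c
        intro m
        show bform (Phi K n i c) (thetaB K n i (phiFun K n i (delta m))) = 0
        rw [hc0]
        exact bform_zero_left _
      simp [this]
    have hinj : Function.Injective (Phi K n i) := LinearMap.ker_eq_bot.mp hker
    rw [LinearMap.finrank_range_of_inj hinj, Module.finrank_pi, Fintype.card_fin]
  · rintro v ⟨c, rfl⟩ hv
    have hc : c = 0 := by
      apply phi_inj_core hchar h2i c
      intro m
      exact hv (Phi K n i (delta m)) ⟨delta m, rfl⟩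
    rw [hc, map_zero]

theorem parabolic_homology_has_diagram_Bni1
    {K : Type} [Field K] {n i : ℕ}
    (hchar : (2 : K) ≠ 0) (hn : 2 ≤ n) (hi1 : 1 ≤ i) (hi2 : i ≤ n - 1) :
    -- θ preserves the form
    (∀ x : VB K n, qform (thetaB K n i x) = qform x) ∧
    (∀ x y : VB K n, bform (thetaB K n i x) (thetaB K n i y) = bform x y) ∧
    -- (a) some singular point is mapped to an opposite point
    (∃ v : VB K n, v ≠ 0 ∧ qform v = 0 ∧ bform v (thetaB K n i v) ≠ 0) ∧
    -- (b) every totally singular subspace of dimension ≥ i+1 contains a nonzero fixed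
    -- vector, hence is not mapped to an opposite
    (∀ U : Submodule K (VB K n), (∀ x ∈ U, qform x = 0) → i + 1 ≤ finrank K U →
      (∃ v ∈ U, v ≠ 0 ∧ thetaB K n i v = v) ∧
      ¬ (∀ v ∈ U, (∀ u ∈ U, bform v (thetaB K n i u) = 0) → v = 0)) ∧
    -- (c) θ maps some totally singular i-dimensional subspace U to an opposite,
    -- i.e. U ∩ (θU)^⊥ = 0
    (∃ U : Submodule K (VB K n), (∀ x ∈ U, qform x = 0) ∧ finrank K U = i ∧
      (∀ v ∈ U, (∀ u ∈ U, bform v (thetaB K n i u) = 0) → v = 0)) :=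
  ⟨fun x => qform_theta x, fun x y => bform_theta x y,
    part_a hchar hn hi1 hi2,
    fun U hts hdim => part_b hchar hn hi1 hi2 U hts hdim,
    part_c hchar hn hi1 hi2⟩
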